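/- For every λ ∈ ℂ with λ ≠ 1, every integer n ≥ 1, every a ∈ ℤ_{≥0}, and all x, the identity H_{n-1}^{(an)}(x+1|λ) = Σ_{l=0}^{n-1} Σ_{k=0}^{l} S₁(n-1, l) · S₂(k+n, n) · (C(l,k)/C(k+n, n)) · H_{l-k}^{(an)}(x|λ) holds as an identity of polynomials in x. -/

import Mathlib

/-- The formal power series `e^{ct} = ∑_{m≥0} c^m t^m / m!` over `ℂ`. -/
noncomputable def expPS (c : ℂ) : PowerSeries ℂ :=
  PowerSeries.mk fun m => c ^ m / (m.factorial : ℂ)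

open PowerSeries Finset

lemma coeff_expPS (c : ℂ) (m : ℕ) :
    PowerSeries.coeff m (expPS c) = c ^ m / (m.factorial : ℂ) := coeff_mk _ _

lemma fact_ne (m : ℕ) : ((m.factorial : ℂ)) ≠ 0 := Nat.cast_ne_zero.2 m.factorial_ne_zero

lemma expPS_mul (x y : ℂ) : expPS x * expPS y = expPS (x + y) := by
  ext m
  rw [PowerSeries.coeff_mul, Finset.Nat.sum_antidiagonal_eq_sum_range_succ_mk]
  simp only [coeff_expPS]
  rw [add_pow, Finset.sum_div]
  refine Finset.sum_congr rfl fun k hk => ?_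
  rw [Finset.mem_range, Nat.lt_succ_iff] at hk
  rw [Nat.cast_choose ℂ hk]
  have h3 := fact_ne m
  have h1 := fact_ne k
  have h2 := fact_ne (m - k)
  field_simp

noncomputable def hps : PowerSeries ℂ := PowerSeries.mk fun j => 1 / ((j+1).factorial : ℂ)

lemma X_mul_hps : (PowerSeries.X : (PowerSeries ℂ)) * hps = expPS 1 - 1 := by
  ext m
  cases m with
  | zero => simp [hps, expPS]
  | succ m =>
      rw [coeff_succ_X_mul]
      simp [hps, expPS, Nat.succ_ne_zero, coeff_one]

lemma deriv_expPS : d⁄dX ℂ (expPS 1) = expPS 1 := by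
  ext m
  rw [PowerSeries.coeff_derivative]
  simp only [coeff_expPS, one_pow, Nat.factorial_succ]
  push_cast
  have h1 := fact_ne m
  have h2 : ((m : ℂ) + 1) ≠ 0 := Nat.cast_add_one_ne_zero m
  field_simp

lemma X_mul_deriv_hps : (PowerSeries.X : (PowerSeries ℂ)) * d⁄dX ℂ hps = expPS 1 - hps := by
  have h := congrArg (d⁄dX ℂ) X_mul_hps
  rw [Derivation.leibniz, smul_eq_mul, smul_eq_mul, PowerSeries.derivative_X, mul_one,
    map_sub, deriv_expPS, Derivation.map_one_eq_zero, sub_zero] at h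
  linear_combination h

lemma coeff_Eh (j : ℕ) : PowerSeries.coeff j (expPS 1 * hps) =
    ((2:ℂ)^(j+1) - 1) / ((j+1).factorial : ℂ) := by
  have h : (PowerSeries.X : (PowerSeries ℂ)) * (expPS 1 * hps) = expPS 2 - expPS 1 := by
    rw [mul_left_comm, X_mul_hps, mul_sub, mul_one]
    rw [expPS_mul]
    norm_num
  have := congrArg (PowerSeries.coeff (j+1)) h
  rw [coeff_succ_X_mul, map_sub, coeff_expPS, coeff_expPS, one_pow] at this
  rw [this, sub_div]

lemma coeff_Edh (r : ℕ) : PowerSeries.coeff r (expPS 1 * d⁄dX ℂ hps) =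
    (2:ℂ)^(r+1) / ((r+1).factorial : ℂ) - ((2:ℂ)^(r+2) - 1) / ((r+2).factorial : ℂ) := by
  have h : (PowerSeries.X : (PowerSeries ℂ)) * (expPS 1 * d⁄dX ℂ hps)
      = expPS 2 - expPS 1 * hps := by
    rw [mul_left_comm, X_mul_deriv_hps, mul_sub]
    rw [expPS_mul]
    norm_num
  have := congrArg (PowerSeries.coeff (r+1)) h
  rw [coeff_succ_X_mul, map_sub, coeff_expPS, coeff_Eh] at this
  rw [this]

noncomputable def s : ℕ → ℕ → ℂ
  | 0, 0 => 1
  | 0, _+1 => 0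
  | N+1, 0 => -(N:ℂ) * s N 0
  | N+1, l+1 => s N l - (N:ℂ) * s N (l+1)

lemma s_zero : ∀ N l, N < l → s N l = 0 := by
  intro N
  induction N with
  | zero => intro l hl; cases l with
      | zero => omega
      | succ l => rfl
  | succ N ih =>
      intro l hl
      cases l with
      | zero => omega
      | succ l =>
          show s N l - (N:ℂ) * s N (l+1) = 0
          rw [ih l (by omega), ih (l+1) (by omega)]
          ring

lemma s_spec (N : ℕ) (x : ℂ) :
    ∏ i ∈ Finset.range N, (x - i) = ∑ l ∈ Finset.range (N+1), s N l * x ^ l := by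
  induction N with
  | zero => simp [s]
  | succ N ih =>
      rw [Finset.prod_range_succ, ih]
      rw [Finset.sum_range_succ' (fun l => s (N+1) l * x ^ l) (N+1)]
      have h0 : s (N+1) 0 * x ^ 0 = -(N:ℂ) * s N 0 := by
        show (-(N:ℂ) * s N 0) * x ^ 0 = _
        ring
      rw [h0]
      have h1 : ∀ l, s (N+1) (l+1) = s N l - (N:ℂ) * s N (l+1) := fun l => rfl
      have hsum : ∑ l ∈ Finset.range (N+1), s (N+1) (l+1) * x ^ (l+1)
          = (∑ l ∈ Finset.range (N+1), s N l * x ^ (l+1))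
            - (N:ℂ) * ∑ l ∈ Finset.range (N+1), s N (l+1) * x ^ (l+1) := by
        rw [Finset.mul_sum, ← Finset.sum_sub_distrib]
        refine Finset.sum_congr rfl fun l _ => ?_
        rw [h1]
        ring
      rw [hsum]
      have h2 : ∑ l ∈ Finset.range (N+1), s N l * x ^ (l+1)
          = (∑ l ∈ Finset.range (N+1), s N l * x ^ l) * x := by
        rw [Finset.sum_mul]
        refine Finset.sum_congr rfl fun l _ => ?_
        ring
      have h3 : (∑ l ∈ Finset.range (N+1), s N (l+1) * x ^ (l+1)) + s N 0 * x ^ 0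
          = ∑ l ∈ Finset.range (N+1), s N l * x ^ l := by
        rw [← Finset.sum_range_succ' (fun l => s N l * x ^ l) (N+1)]
        rw [Finset.sum_range_succ, s_zero N (N+1) (by omega)]
        ring
      have h3' : ∑ l ∈ Finset.range (N+1), s N (l+1) * x ^ (l+1)
          = (∑ l ∈ Finset.range (N+1), s N l * x ^ l) - s N 0 := by
        rw [← h3]; ring
      rw [h2, h3']
      ring

lemma key_scalar (r m : ℕ) :
    (((m:ℂ) + r + 2) * ((2:ℂ)^(r+1)/(((r+1).factorial : ℂ)) - ((2:ℂ)^(r+2)-1)/(((r+2).factorial : ℂ)))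
      - ((m:ℂ)+(r:ℂ)) * (((2:ℂ)^(r+1)-1)/(((r+1).factorial : ℂ)))
      - 1/((r.factorial : ℂ)))
      + (m:ℂ) * (((2:ℂ)^(r+2)-1)/(((r+2).factorial : ℂ)) - 1/(((r+1).factorial : ℂ))) = 0 := by
  have h0 := fact_ne r
  have hr1 : ((r:ℂ)+1) ≠ 0 := Nat.cast_add_one_ne_zero r
  have hr2 : ((r:ℂ)+2) ≠ 0 := by
    have : ((r+2 : ℕ) : ℂ) ≠ 0 := Nat.cast_ne_zero.2 (by omega)
    push_cast at this; exact this
  have e1 : ((r+1).factorial : ℂ) = ((r:ℂ)+1) * (r.factorial : ℂ) := by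
    rw [Nat.factorial_succ]; push_cast; ring
  have e2 : ((r+2).factorial : ℂ) = ((r:ℂ)+2) * (((r:ℂ)+1) * (r.factorial : ℂ)) := by
    show (((r+1)+1).factorial : ℂ) = _
    rw [Nat.factorial_succ, Nat.factorial_succ]; push_cast; ring
  have p2 : (2:ℂ)^(r+2) = 4 * (2:ℂ)^r := by ring
  have p1 : (2:ℂ)^(r+1) = 2 * (2:ℂ)^r := by ring
  rw [e1, e2, p2, p1]
  generalize (r.factorial : ℂ) = A at *
  generalize (2:ℂ)^r = U
  generalize hc : (r:ℂ) = cr at *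
  have hD1 : (cr+1) * A ≠ 0 := mul_ne_zero hr1 h0
  have hD : (cr+2) * ((cr+1) * A) ≠ 0 := mul_ne_zero hr2 hD1
  have f1 : (1:ℂ)/A = ((cr+2)*(cr+1))/((cr+2)*((cr+1)*A)) := by
    rw [div_eq_div_iff h0 hD]; ring
  have f2 : ∀ X:ℂ, X/((cr+1)*A) = ((cr+2)*X)/((cr+2)*((cr+1)*A)) := fun X => by
    rw [div_eq_div_iff hD1 hD]; ring
  rw [f1]
  simp only [f2, ← mul_div_assoc, div_sub_div_same, ← add_div, ← sub_div]
  rw [div_eq_zero_iff]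
  left
  ring

noncomputable def Aps (N : ℕ) : PowerSeries ℂ :=
  PowerSeries.C ((N:ℂ)+2) * (expPS 1 * d⁄dX ℂ hps)
    - PowerSeries.C (N:ℂ) * (expPS 1 * hps) - expPS 1

noncomputable def Bps : PowerSeries ℂ := expPS 1 * hps - expPS 1

lemma coeff_Bps_zero : PowerSeries.coeff 0 Bps = 0 := by
  rw [Bps, map_sub, coeff_Eh, coeff_expPS]
  norm_num

lemma key_scalar' (N k : ℕ) (hk : k ≤ N) :
    PowerSeries.coeff k (Aps N) + ((N-k : ℕ):ℂ) * PowerSeries.coeff (k+1) Bps = 0 := by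
  rw [Aps, Bps, map_sub, map_sub, map_sub, PowerSeries.coeff_C_mul, PowerSeries.coeff_C_mul,
    coeff_Edh, coeff_Eh, coeff_Eh, coeff_expPS, coeff_expPS, one_pow, one_pow]
  have h := key_scalar k (N - k)
  have hc : ((N - k : ℕ):ℂ) = (N:ℂ) - k := by
    rw [Nat.cast_sub hk]
  rw [hc] at h ⊢
  linear_combination h

lemma zero_AB (N : ℕ) (F : PowerSeries ℂ) :
    PowerSeries.coeff N (Aps N * F) + PowerSeries.coeff N (Bps * d⁄dX ℂ F) = 0 := by
  have hAF : PowerSeries.coeff N (Aps N * F)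
      = ∑ k ∈ Finset.range (N+1), PowerSeries.coeff k (Aps N) * PowerSeries.coeff (N-k) F := by
    rw [PowerSeries.coeff_mul, Finset.Nat.sum_antidiagonal_eq_sum_range_succ_mk]
  have hBF : PowerSeries.coeff N (Bps * d⁄dX ℂ F)
      = ∑ k ∈ Finset.range (N+1),
          PowerSeries.coeff k Bps * (PowerSeries.coeff (N-k+1) F * ((N-k+1 : ℕ):ℂ)) := by
    rw [PowerSeries.coeff_mul, Finset.Nat.sum_antidiagonal_eq_sum_range_succ_mk]
    refine Finset.sum_congr rfl fun k hk => ?_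
    rw [PowerSeries.coeff_derivative]
    push_cast
    ring
  rw [hAF, hBF]
  rw [Finset.sum_range_succ'
    (fun k => PowerSeries.coeff k Bps * (PowerSeries.coeff (N-k+1) F * ((N-k+1 : ℕ):ℂ))) N]
  rw [coeff_Bps_zero, zero_mul, add_zero]
  rw [Finset.sum_range_succ
    (fun k => PowerSeries.coeff k (Aps N) * PowerSeries.coeff (N-k) F) N]
  have hAN : PowerSeries.coeff N (Aps N) = 0 := by
    have := key_scalar' N N le_rfl
    simpa using this
  rw [hAN, zero_mul, add_zero]
  have hre : ∀ k ∈ Finset.range N,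
      PowerSeries.coeff (k+1) Bps * (PowerSeries.coeff (N-(k+1)+1) F * ((N-(k+1)+1 : ℕ):ℂ))
      = ((N-k:ℕ):ℂ) * PowerSeries.coeff (k+1) Bps * PowerSeries.coeff (N-k) F := by
    intro k hk
    rw [Finset.mem_range] at hk
    have : N - (k+1) + 1 = N - k := by omega
    rw [this]
    ring
  rw [Finset.sum_congr rfl hre, ← Finset.sum_add_distrib]
  refine Finset.sum_eq_zero fun k hk => ?_
  rw [Finset.mem_range] at hk
  have := key_scalar' N k (le_of_lt hk)
  linear_combination PowerSeries.coeff (N-k) F * this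

lemma KK : ∀ N : ℕ, ∀ F : PowerSeries ℂ,
    ((N.factorial : ℂ)) * PowerSeries.coeff N (expPS 1 * F) =
    ∑ l ∈ Finset.range (N+1), s N l * (l.factorial : ℂ)
      * PowerSeries.coeff l (hps^(N+1) * F) := by
  intro N
  induction N with
  | zero =>
      intro F
      have h1 : PowerSeries.constantCoeff (expPS 1) = 1 := by
        rw [← PowerSeries.coeff_zero_eq_constantCoeff, coeff_expPS]; norm_num
      have h2 : PowerSeries.constantCoeff hps = 1 := by
        rw [← PowerSeries.coeff_zero_eq_constantCoeff]
        simp [hps]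
      have hs00 : s 0 0 = 1 := rfl
      rw [Finset.sum_range_succ, Finset.sum_range_zero, zero_add, hs00,
        PowerSeries.coeff_zero_eq_constantCoeff,
        map_mul, map_mul, map_pow, h1, h2, one_pow]
      simp
  | succ N ih =>
      intro F
      set G : PowerSeries ℂ := hps^(N+2) * F with hG
      set W : PowerSeries ℂ :=
        PowerSeries.C ((N:ℂ)+2) * (d⁄dX ℂ hps * F) + hps * d⁄dX ℂ F
          - PowerSeries.C (N:ℂ) * (hps * F) with hW
      have hrec : ∀ l, s (N+1) (l+1) = s N l - (N:ℂ) * s N (l+1) := fun l => rfl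
      have h0 : s (N+1) 0 = -(N:ℂ) * s N 0 := rfl
      -- Step 1 : reorganize the RHS sum
      have step1 : ∑ l ∈ Finset.range (N+2), s (N+1) l * (l.factorial:ℂ) * PowerSeries.coeff l G
          = ∑ l ∈ Finset.range (N+1), s N l * (l.factorial:ℂ) *
              PowerSeries.coeff l (d⁄dX ℂ G - PowerSeries.C (N:ℂ) * G) := by
        rw [Finset.sum_range_succ'
          (fun l => s (N+1) l * (l.factorial:ℂ) * PowerSeries.coeff l G) (N+1)]
        have hA : ∀ l, s (N+1) (l+1) * ((l+1).factorial:ℂ) * PowerSeries.coeff (l+1) G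
            = s N l * (l.factorial:ℂ) * PowerSeries.coeff l (d⁄dX ℂ G)
              - (N:ℂ) * (s N (l+1) * ((l+1).factorial:ℂ) * PowerSeries.coeff (l+1) G) := by
          intro l
          rw [hrec, PowerSeries.coeff_derivative, Nat.factorial_succ]
          push_cast
          ring
        have hsplit : ∑ l ∈ Finset.range (N+1),
            s (N+1) (l+1) * ((l+1).factorial:ℂ) * PowerSeries.coeff (l+1) G
            = (∑ l ∈ Finset.range (N+1), s N l * (l.factorial:ℂ) * PowerSeries.coeff l (d⁄dX ℂ G))
              - (N:ℂ) * ∑ l ∈ Finset.range (N+1),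
                  s N (l+1) * ((l+1).factorial:ℂ) * PowerSeries.coeff (l+1) G := by
          rw [Finset.mul_sum, ← Finset.sum_sub_distrib]
          exact Finset.sum_congr rfl fun l _ => hA l
        have hsum2 : (∑ l ∈ Finset.range (N+1),
              s N (l+1) * ((l+1).factorial:ℂ) * PowerSeries.coeff (l+1) G)
              + s N 0 * ((Nat.factorial 0 : ℕ):ℂ) * PowerSeries.coeff 0 G
            = ∑ l ∈ Finset.range (N+1), s N l * (l.factorial:ℂ) * PowerSeries.coeff l G := by
          rw [← Finset.sum_range_succ'
            (fun l => s N l * (l.factorial:ℂ) * PowerSeries.coeff l G) (N+1)]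
          rw [Finset.sum_range_succ, s_zero N (N+1) (by omega)]
          simp
        have hR : ∑ l ∈ Finset.range (N+1), s N l * (l.factorial:ℂ) *
              PowerSeries.coeff l (d⁄dX ℂ G - PowerSeries.C (N:ℂ) * G)
            = (∑ l ∈ Finset.range (N+1), s N l * (l.factorial:ℂ) * PowerSeries.coeff l (d⁄dX ℂ G))
              - (N:ℂ) * ∑ l ∈ Finset.range (N+1),
                  s N l * (l.factorial:ℂ) * PowerSeries.coeff l G := by
          rw [Finset.mul_sum, ← Finset.sum_sub_distrib]
          refine Finset.sum_congr rfl fun l _ => ?_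
          rw [map_sub, PowerSeries.coeff_C_mul]
          ring
        rw [hsplit, hR, h0]
        linear_combination (-(N:ℂ)) * hsum2
      -- Step 2 : the series identity
      have step2 : d⁄dX ℂ G - PowerSeries.C (N:ℂ) * G = hps^(N+1) * W := by
        have hcast : ((N+2:ℕ) : PowerSeries ℂ) = PowerSeries.C ((N:ℂ)+2) := by
          have hq : ((N+2:ℕ):ℂ) = (N:ℂ)+2 := by push_cast; ring
          rw [← hq, map_natCast]
        have hdG : d⁄dX ℂ G = hps^(N+2) * d⁄dX ℂ F
            + F * (((N+2:ℕ) : PowerSeries ℂ) * (hps^(N+1) * d⁄dX ℂ hps)) := by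
          rw [hG, Derivation.leibniz, Derivation.leibniz_pow]
          have hexp : N + 2 - 1 = N + 1 := by omega
          rw [hexp]
          simp only [smul_eq_mul, nsmul_eq_mul]
        rw [hdG, hcast, hW, hG]
        ring
      rw [step1, step2, ← ih W]
      -- Step 3 : conclude
      have hEW : expPS 1 * W = (Aps N * F + Bps * d⁄dX ℂ F)
          + (expPS 1 * d⁄dX ℂ F + expPS 1 * F) := by
        rw [Aps, Bps, hW]
        ring
      have hzero := zero_AB N F
      have hcoeffEW : PowerSeries.coeff N (expPS 1 * W)
          = PowerSeries.coeff N (expPS 1 * d⁄dX ℂ F) + PowerSeries.coeff N (expPS 1 * F) := by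
        rw [hEW, map_add, map_add, map_add]
        linear_combination hzero
      have hder : PowerSeries.coeff N (expPS 1 * d⁄dX ℂ F) + PowerSeries.coeff N (expPS 1 * F)
          = PowerSeries.coeff (N+1) (expPS 1 * F) * (((N+1:ℕ)):ℂ) := by
        have hd : d⁄dX ℂ (expPS 1 * F) = expPS 1 * d⁄dX ℂ F + F * expPS 1 := by
          rw [Derivation.leibniz, smul_eq_mul, smul_eq_mul, deriv_expPS]
        have := PowerSeries.coeff_derivative (expPS 1 * F) N
        rw [hd, map_add] at this
        rw [mul_comm F (expPS 1)] at this
        push_cast at this ⊢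
        linear_combination this
      rw [hcoeffEW, hder, Nat.factorial_succ]
      push_cast
      ring

lemma S1_eq_s (S1 : ℕ → ℕ → ℂ)
    (hS1 : ∀ (m : ℕ) (x : ℂ),
      ∏ i ∈ Finset.range m, (x - i) = ∑ l ∈ Finset.range (m + 1), S1 m l * x ^ l)
    (N l : ℕ) (hl : l ≤ N) : S1 N l = s N l := by
  have hzero : ∀ x : ℂ, Polynomial.eval x
      (∑ j ∈ Finset.range (N+1), Polynomial.C (S1 N j - s N j) * Polynomial.X ^ j) = 0 := by
    intro x
    rw [Polynomial.eval_finset_sum]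
    simp only [Polynomial.eval_mul, Polynomial.eval_C, Polynomial.eval_pow, Polynomial.eval_X]
    have h1 := hS1 N x
    have h2 := s_spec N x
    have : ∑ j ∈ Finset.range (N+1), (S1 N j - s N j) * x ^ j
        = (∑ j ∈ Finset.range (N+1), S1 N j * x ^ j)
          - ∑ j ∈ Finset.range (N+1), s N j * x ^ j := by
      rw [← Finset.sum_sub_distrib]
      exact Finset.sum_congr rfl fun j _ => by ring
    rw [this, ← h1, ← h2, sub_self]
  have hP : (∑ j ∈ Finset.range (N+1), Polynomial.C (S1 N j - s N j) * Polynomial.X ^ j)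
      = (0 : Polynomial ℂ) :=
    Polynomial.funext fun x => by rw [hzero x, Polynomial.eval_zero]
  have hco := congrArg (fun p => Polynomial.coeff p l) hP
  simp only [Polynomial.finset_sum_coeff, Polynomial.coeff_C_mul, Polynomial.coeff_X_pow,
    Polynomial.coeff_zero] at hco
  rw [Finset.sum_eq_single l (fun j _ hj => by rw [if_neg (Ne.symm hj), mul_zero])
    (fun hnl => absurd (Finset.mem_range.mpr (by omega)) hnl)] at hco
  rw [if_pos rfl, mul_one] at hco
  exact sub_eq_zero.mp hco

lemma coeff_hpow (n : ℕ) (S2 : ℕ → ℕ → ℂ)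
    (hS2 : ∀ m : ℕ,
      (expPS 1 - 1) ^ m =
        PowerSeries.C (m.factorial : ℂ) *
          PowerSeries.mk (fun l => S2 l m / (l.factorial : ℂ))) (k : ℕ) :
    PowerSeries.coeff k (hps ^ n)
      = (n.factorial : ℂ) * (S2 (k+n) n / ((k+n).factorial : ℂ)) := by
  have h : (PowerSeries.X : PowerSeries ℂ)^n * hps^n
      = PowerSeries.C (n.factorial : ℂ) *
          PowerSeries.mk (fun l => S2 l n / (l.factorial : ℂ)) := by
    rw [← mul_pow, X_mul_hps, hS2 n]
  have := congrArg (PowerSeries.coeff (k + n)) h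
  rw [PowerSeries.coeff_X_pow_mul, PowerSeries.coeff_C_mul, PowerSeries.coeff_mk] at this
  exact this

/-- For `λ ≠ 1`, `n ≥ 1`, `a ∈ ℤ_{≥0}` and all `x`,
`H_{n-1}^{(an)}(x+1|λ) = ∑_{l=0}^{n-1} ∑_{k=0}^{l} S₁(n-1,l) S₂(k+n,n)
 (C(l,k)/C(k+n,n)) H_{l-k}^{(an)}(x|λ)`.
Here `H_m^{(α)}(x|λ)` is characterized by
`((1-λ)/(e^t-λ))^α e^{xt} = ∑_m H_m^{(α)}(x|λ) t^m/m!`, the Stirling numbers of the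
second kind `S₂(l,m)` by `(e^t-1)^m = m! ∑_l S₂(l,m) t^l/l!`, and the Stirling numbers
of the first kind `S₁(m,l)` by `x(x-1)⋯(x-m+1) = ∑_{l=0}^m S₁(m,l) x^l`. -/
theorem stmt2 (lam : ℂ) (hlam : lam ≠ 1) (n : ℕ) (hn : 1 ≤ n) (a : ℕ)
    (H : ℕ → ℕ → ℂ → ℂ)
    (hH : ∀ (α : ℕ) (x : ℂ),
      (expPS 1 - PowerSeries.C lam) ^ α *
          PowerSeries.mk (fun m => H α m x / (m.factorial : ℂ)) =
        PowerSeries.C (1 - lam) ^ α * expPS x)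
    (S1 : ℕ → ℕ → ℂ)
    (hS1 : ∀ (m : ℕ) (x : ℂ),
      ∏ i ∈ Finset.range m, (x - i) = ∑ l ∈ Finset.range (m + 1), S1 m l * x ^ l)
    (S2 : ℕ → ℕ → ℂ)
    (hS2 : ∀ m : ℕ,
      (expPS 1 - 1) ^ m =
        PowerSeries.C (m.factorial : ℂ) *
          PowerSeries.mk (fun l => S2 l m / (l.factorial : ℂ))) :
    ∀ x : ℂ,
      H (a * n) (n - 1) (x + 1) =
        ∑ l ∈ Finset.range n, ∑ k ∈ Finset.range (l + 1),
          S1 (n - 1) l * S2 (k + n) n *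
            ((l.choose k : ℂ) / ((k + n).choose n : ℂ)) * H (a * n) (l - k) x := by
  intro x
  set N := n - 1 with hNdef
  have hN : N + 1 = n := Nat.succ_pred_eq_of_pos hn
  set mkx : PowerSeries ℂ := PowerSeries.mk (fun m => H (a*n) m x / (m.factorial : ℂ)) with hmkx
  -- the shifted series
  have hu : (expPS 1 - PowerSeries.C lam) ≠ 0 := by
    intro h
    have := congrArg (PowerSeries.constantCoeff) h
    rw [map_sub, PowerSeries.constantCoeff_C, map_zero,
      ← PowerSeries.coeff_zero_eq_constantCoeff, coeff_expPS] at this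
    norm_num at this
    exact hlam (by linear_combination -this)
  have hshift : PowerSeries.mk (fun m => H (a*n) m (x+1) / (m.factorial:ℂ))
      = expPS 1 * mkx := by
    refine (mul_left_cancel₀ (pow_ne_zero (a*n) hu) ?_).symm
    calc (expPS 1 - PowerSeries.C lam)^(a*n) * (expPS 1 * mkx)
        = expPS 1 * ((expPS 1 - PowerSeries.C lam)^(a*n) * mkx) := by ring
      _ = expPS 1 * (PowerSeries.C (1-lam)^(a*n) * expPS x) := by rw [hmkx, hH (a*n) x]
      _ = PowerSeries.C (1-lam)^(a*n) * (expPS x * expPS 1) := by ring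
      _ = PowerSeries.C (1-lam)^(a*n) * expPS (x+1) := by rw [expPS_mul]
      _ = (expPS 1 - PowerSeries.C lam)^(a*n)
            * PowerSeries.mk (fun m => H (a*n) m (x+1) / (m.factorial:ℂ)) :=
        (hH (a*n) (x+1)).symm
  have hHval : H (a*n) N (x+1) = (N.factorial : ℂ) * PowerSeries.coeff N (expPS 1 * mkx) := by
    have hc := congrArg (PowerSeries.coeff N) hshift
    rw [PowerSeries.coeff_mk] at hc
    rw [← hc]
    have := fact_ne N
    field_simp
  rw [hHval, KK N mkx, hN]
  refine Finset.sum_congr rfl fun l hl => ?_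
  rw [Finset.mem_range] at hl
  have hlN : l ≤ N := by omega
  rw [S1_eq_s S1 hS1 N l hlN]
  rw [PowerSeries.coeff_mul, Finset.Nat.sum_antidiagonal_eq_sum_range_succ_mk, Finset.mul_sum]
  refine Finset.sum_congr rfl fun k hk => ?_
  rw [Finset.mem_range] at hk
  have hkl : k ≤ l := by omega
  rw [coeff_hpow n S2 hS2 k, hmkx, PowerSeries.coeff_mk]
  have hch1 : (l.choose k : ℂ) = (l.factorial : ℂ) / ((k.factorial : ℂ) * ((l-k).factorial : ℂ)) := by
    rw [Nat.cast_choose ℂ hkl]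
  have hch2 : ((k+n).choose n : ℂ)
      = ((k+n).factorial : ℂ) / ((n.factorial : ℂ) * (k.factorial : ℂ)) := by
    rw [Nat.cast_choose ℂ (Nat.le_add_left n k), Nat.add_sub_cancel]
  rw [hch1, hch2]
  have f1 := fact_ne l
  have f2 := fact_ne k
  have f3 := fact_ne (l-k)
  have f4 := fact_ne (k+n)
  have f5 := fact_ne n
  field_simp
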